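/- Let G be a connected chemical graph with n vertices and cyclomatic number c ≥ 2, where c = m − n + 1. If n ≤ 2c − 2, then s(G) = (4(n − c + 1)/n)·n₄(G). -/

import Mathlib

open Finset

/-- The degree deviation measure `s(G) = ∑_v |deg(v) - 2m/n|`. -/
noncomputable def degDev {V : Type*} [Fintype V] [DecidableEq V]
    (G : SimpleGraph V) [DecidableRel G.Adj] : ℝ :=
  ∑ v : V, |(G.degree v : ℝ) - 2 * G.edgeFinset.card / (Fintype.card V)|


/-- The number of vertices of degree `i` in `G`. -/
def degCount {V : Type*} [Fintype V] [DecidableEq V]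
    (G : SimpleGraph V) [DecidableRel G.Adj] (i : ℕ) : ℕ :=
  (Finset.univ.filter (fun v => G.degree v = i)).card

theorem degDev_chemical_small_n {n : ℕ} (G : SimpleGraph (Fin n))
    [DecidableRel G.Adj] (hconn : G.Connected) (hdeg : ∀ v, G.degree v ≤ 4)
    (c : ℕ) (hcge : 2 ≤ c) (hc : G.edgeFinset.card + 1 = n + c)
    (hsmall : n ≤ 2 * c - 2) :
    degDev G = 4 * ((n : ℝ) - c + 1) / n * degCount G 4 := by
  classical
  have hne : Nonempty (Fin n) := hconn.nonempty
  have hn : 0 < n := (Classical.arbitrary (Fin n)).pos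
  set m := G.edgeFinset.card with hm
  have hsum : ∑ v, G.degree v = 2 * m := G.sum_degrees_eq_twice_card_edges
  have hub : ∑ v, G.degree v ≤ 4 * n := by
    calc ∑ v, G.degree v ≤ ∑ _v : Fin n, 4 := Finset.sum_le_sum (fun v _ => hdeg v)
    _ = 4 * n := by simp [Finset.sum_const, Fintype.card_fin, Nat.mul_comm]
  have h2m4n : 2 * m ≤ 4 * n := hsum ▸ hub
  have h3n2m : 3 * n ≤ 2 * m := by omega
  have hnR : (0:ℝ) < n := by exact_mod_cast hn
  set A : ℝ := 2 * m / n with hA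
  have hnA : (n:ℝ) * A = 2 * m := by rw [hA]; field_simp [hnR.ne']
  have hA4 : A ≤ 4 := by
    rw [hA, div_le_iff₀ hnR]
    have : (2 * m : ℝ) ≤ 4 * n := by exact_mod_cast h2m4n
    linarith
  have hA3 : (3:ℝ) ≤ A := by
    rw [hA, le_div_iff₀ hnR]
    have : (3 * n : ℝ) ≤ 2 * m := by exact_mod_cast h3n2m
    linarith
  have key : ∀ v : Fin n, |(G.degree v : ℝ) - A| =
      (A - G.degree v) + (if G.degree v = 4 then 2 * (4 - A) else 0) := by
    intro v
    by_cases h : G.degree v = 4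
    · rw [if_pos h, h]
      push_cast
      rw [abs_of_nonneg (by linarith)]; ring
    · have hle : G.degree v ≤ 3 := by have := hdeg v; omega
      have hle' : (G.degree v : ℝ) ≤ 3 := by exact_mod_cast hle
      rw [if_neg h, abs_of_nonpos (by linarith)]; ring
  unfold degDev
  have hrw : ∀ v : Fin n,
      |(G.degree v:ℝ) - 2 * G.edgeFinset.card / (Fintype.card (Fin n))| =
        |(G.degree v:ℝ) - A| := by
    intro v; rw [hA]; simp [Fintype.card_fin, hm]
  rw [Finset.sum_congr rfl (fun v _ => (hrw v).trans (key v)), Finset.sum_add_distrib]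
  have h1 : ∑ v : Fin n, (A - (G.degree v:ℝ)) = 0 := by
    rw [Finset.sum_sub_distrib]
    have hds : ∑ v : Fin n, (G.degree v : ℝ) = 2 * m := by
      rw [← Nat.cast_sum]; exact_mod_cast congrArg (Nat.cast (R := ℝ)) hsum
    rw [hds, Finset.sum_const, Finset.card_univ, Fintype.card_fin, nsmul_eq_mul, hnA]; ring
  rw [h1, zero_add]
  have h2 : ∑ v : Fin n, (if G.degree v = 4 then 2*(4-A) else 0)
      = (degCount G 4 : ℝ) * (2*(4-A)) := by
    rw [← Finset.sum_filter, Finset.sum_const, nsmul_eq_mul, degCount]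
  rw [h2]
  have hmR : (m:ℝ) = n + c - 1 := by
    have : (m:ℝ) + 1 = n + c := by exact_mod_cast hc
    linarith
  have hfin : 2*(4-A) = 4*((n:ℝ) - c + 1)/n := by
    rw [hA, hmR]; field_simp; ring
  rw [hfin]; ring
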